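/- Let H be a complex Hilbert space and (f_n)_{n∈ℤ} a pairwise orthogonal family in H which is summable with sum f. For θ ∈ ℝ let g(θ) denote the sum of the (summable) family (e^{2πinθ}·f_n)_{n∈ℤ}. Suppose there are C ≥ 0 and s ∈ (0, 1] such that ‖g(θ) − f‖ ≤ C·θ^s for all θ ∈ (0, 1]. Then for every s′ ∈ (0, s): ∑_{n∈ℤ} |n|^{2s′}·‖f_n‖² ≤ C²/(2(s − s′)). -/

import Mathlib

open MeasureTheory Set

lemma bessel_finset {H : Type*} [NormedAddCommGroup H] [InnerProductSpace ℂ H]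
    (u : ℤ → H) (v : H) (horth : ∀ m n : ℤ, m ≠ n → (inner ℂ (u m) (u n) : ℂ) = 0)
    (hv : HasSum u v) (A : Finset ℤ) :
    ∑ n ∈ A, ‖u n‖ ^ 2 ≤ ‖v‖ ^ 2 := by
  have key : ∀ n : ℤ, (inner ℂ (u n) v : ℂ) = ((‖u n‖ : ℂ)) ^ 2 := by
    intro n
    have h1 : HasSum (fun m => (inner ℂ (u n) (u m) : ℂ)) (inner ℂ (u n) v) :=
      (innerSL ℂ (u n)).hasSum hv
    have h2 : HasSum (fun m => (inner ℂ (u n) (u m) : ℂ)) (inner ℂ (u n) (u n)) :=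
      hasSum_single n (fun m hm => horth n m (Ne.symm hm))
    rw [h1.unique h2, inner_self_eq_norm_sq_to_K]
    norm_cast
  set S := ∑ n ∈ A, u n with hS
  have hvS : (inner ℂ v S : ℂ) = ((∑ n ∈ A, ‖u n‖ ^ 2 : ℝ) : ℂ) := by
    rw [inner_sum]
    push_cast
    refine Finset.sum_congr rfl fun n _ => ?_
    rw [← inner_conj_symm, key n]
    simp
  have hre : (RCLike.re (inner ℂ v S : ℂ)) = ∑ n ∈ A, ‖u n‖ ^ 2 := by
    rw [hvS]; norm_cast
  have hSS : ‖S‖ ^ 2 = ∑ n ∈ A, ‖u n‖ ^ 2 := by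
    have : (inner ℂ S S : ℂ) = ((∑ n ∈ A, ‖u n‖ ^ 2 : ℝ) : ℂ) := by
      rw [hS, sum_inner]
      push_cast
      refine Finset.sum_congr rfl fun n hn => ?_
      rw [inner_sum]
      rw [Finset.sum_eq_single n (fun m _ hm => horth n m (Ne.symm hm)) (fun h => absurd hn h)]
      rw [inner_self_eq_norm_sq_to_K]
      norm_cast
    have := congrArg (RCLike.re (K := ℂ)) this
    rw [inner_self_eq_norm_sq] at this
    rw [this]; norm_cast
  have hnn : (0:ℝ) ≤ ‖v - S‖ ^ 2 := sq_nonneg _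
  rw [@norm_sub_sq ℂ] at hnn
  rw [hre, hSS] at hnn
  linarith

lemma coeff_norm_sq (x : ℝ) :
    ‖Complex.exp ((x : ℂ) * Complex.I) - 1‖ ^ 2 = 2 - 2 * Real.cos x := by
  have h : Complex.exp ((x : ℂ) * Complex.I) - 1
      = ((Real.cos x - 1 : ℝ) : ℂ) + ((Real.sin x : ℝ) : ℂ) * Complex.I := by
    rw [Complex.exp_mul_I]
    push_cast
    ring
  rw [h, Complex.sq_norm, Complex.normSq_add_mul_I]
  nlinarith [Real.sin_sq_add_cos_sq x]

lemma rpow_Ioc_integrableOn {r : ℝ} (hr : -1 < r) :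
    MeasureTheory.IntegrableOn (fun x : ℝ => x ^ r) (Set.Ioc (0:ℝ) 1) :=
  (intervalIntegral.intervalIntegrable_rpow' (a := 0) (b := 1) hr).1

lemma two_rpow_key {t : ℝ} (ht0 : 0 < t) : t ≤ 2 * ((4:ℝ) ^ t - (2:ℝ) ^ t) := by
  have h4 : (4:ℝ) ^ t = (2:ℝ) ^ t * (2:ℝ) ^ t := by
    rw [show (4:ℝ) = 2 * 2 by norm_num, Real.mul_rpow (by norm_num) (by norm_num)]
  have h2t : (1:ℝ) + t * Real.log 2 ≤ (2:ℝ) ^ t := by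
    rw [Real.rpow_def_of_pos (by norm_num)]
    have := Real.add_one_le_exp (Real.log 2 * t)
    linarith
  have h2t1 : (1:ℝ) ≤ (2:ℝ) ^ t := Real.one_le_rpow (by norm_num) ht0.le
  have hlog : (0.6931471803 : ℝ) < Real.log 2 := Real.log_two_gt_d9
  nlinarith

theorem sobolev_from_holder
    {H : Type*} [NormedAddCommGroup H] [InnerProductSpace ℂ H]
    (f : ℤ → H) (F : H) (g : ℝ → H) (C s s' : ℝ)
    (hC : 0 ≤ C) (hs : s ∈ Set.Ioc (0 : ℝ) 1) (hs' : s' ∈ Set.Ioo 0 s)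
    (horth : ∀ m n : ℤ, m ≠ n → (inner ℂ (f m) (f n) : ℂ) = 0)
    (hF : HasSum f F)
    (hg : ∀ θ : ℝ, HasSum
      (fun n : ℤ => Complex.exp (2 * (Real.pi : ℂ) * Complex.I * (n : ℂ) * (θ : ℂ)) • f n)
      (g θ))
    (hholder : ∀ θ ∈ Set.Ioc (0 : ℝ) 1, ‖g θ - F‖ ≤ C * θ ^ s) :
    ∑' n : ℤ, ENNReal.ofReal (|(n : ℝ)| ^ (2 * s') * ‖f n‖ ^ 2)
      ≤ ENNReal.ofReal (C ^ 2 / (2 * (s - s'))) := by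
  obtain ⟨hs0, hs1⟩ := hs
  obtain ⟨hs'0, hs's⟩ := hs'
  set t : ℝ := 2 * s' with ht
  have ht0 : 0 < t := by positivity
  have ht2 : t < 2 := by simp only [ht]; linarith
  have hst : 0 < 2 * s - t := by simp only [ht]; linarith
  set c : ℤ → ℝ := fun n => ‖f n‖ ^ 2 with hc
  have hc0 : ∀ n, 0 ≤ c n := fun n => sq_nonneg _
  -- pointwise Bessel bound
  have pointwise : ∀ θ ∈ Set.Ioc (0:ℝ) 1, ∀ A : Finset ℤ,
      ∑ n ∈ A, (2 - 2 * Real.cos (2 * Real.pi * n * θ)) * c n ≤ C ^ 2 * θ ^ (2 * s) := by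
    intro θ hθ A
    set u : ℤ → H := fun n =>
      (Complex.exp (2 * (Real.pi : ℂ) * Complex.I * (n : ℂ) * (θ : ℂ)) - 1) • f n with hu
    have husum : HasSum u (g θ - F) := by
      have := (hg θ).sub hF
      simpa [hu, sub_smul] using this
    have huorth : ∀ m n : ℤ, m ≠ n → (inner ℂ (u m) (u n) : ℂ) = 0 := by
      intro m n hmn
      simp [hu, inner_smul_left, inner_smul_right, horth m n hmn]
    have hb := bessel_finset u (g θ - F) huorth husum A
    have hnorm : ∀ n : ℤ, ‖u n‖ ^ 2 = (2 - 2 * Real.cos (2 * Real.pi * n * θ)) * c n := by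
      intro n
      have harg : (2 * (Real.pi : ℂ) * Complex.I * (n : ℂ) * (θ : ℂ))
          = ((2 * Real.pi * n * θ : ℝ) : ℂ) * Complex.I := by
        push_cast; ring
      rw [hu]
      simp only [norm_smul, mul_pow, harg, coeff_norm_sq]
      rfl
    have hA : ∑ n ∈ A, ‖u n‖ ^ 2
        = ∑ n ∈ A, (2 - 2 * Real.cos (2 * Real.pi * n * θ)) * c n :=
      Finset.sum_congr rfl fun n _ => hnorm n
    have hholder2 : ‖g θ - F‖ ^ 2 ≤ C ^ 2 * θ ^ (2 * s) := by
      have h1 := hholder θ hθ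
      have h2' : (θ ^ s) ^ 2 = θ ^ (2 * s) := by
        rw [← Real.rpow_natCast (θ ^ s) 2, ← Real.rpow_mul hθ.1.le]
        norm_num [mul_comm]
      have h2 : (C * θ ^ s) ^ 2 = C ^ 2 * θ ^ (2 * s) := by
        rw [mul_pow, h2']
      rw [← h2]
      exact pow_le_pow_left₀ (norm_nonneg _) h1 2
    calc ∑ n ∈ A, (2 - 2 * Real.cos (2 * Real.pi * n * θ)) * c n
        = ∑ n ∈ A, ‖u n‖ ^ 2 := hA.symm
      _ ≤ ‖g θ - F‖ ^ 2 := hb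
      _ ≤ C ^ 2 * θ ^ (2 * s) := hholder2
  -- integrand family
  set Φ : ℤ → ℝ → ℝ :=
    fun n θ => θ ^ (-1 - t) * ((2 - 2 * Real.cos (2 * Real.pi * n * θ)) * c n) with hΦ
  have hΦnonneg : ∀ n : ℤ, ∀ θ ∈ Set.Ioc (0:ℝ) 1, 0 ≤ Φ n θ := by
    intro n θ hθ
    have := Real.cos_le_one (2 * Real.pi * n * θ)
    have h1 : (0:ℝ) ≤ θ ^ (-1 - t) := Real.rpow_nonneg hθ.1.le _
    have h2 : (0:ℝ) ≤ 2 - 2 * Real.cos (2 * Real.pi * n * θ) := by linarith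
    positivity
  have hΦcont : ∀ n : ℤ, ContinuousOn (Φ n) {x : ℝ | x ≠ 0} := by
    intro n
    apply ContinuousOn.mul
    · exact ContinuousOn.rpow_const continuousOn_id (fun x hx => Or.inl hx)
    · have : Continuous fun θ : ℝ => (2 - 2 * Real.cos (2 * Real.pi * n * θ)) * c n := by
        fun_prop
      exact this.continuousOn
  have hΦint : ∀ n : ℤ, IntegrableOn (Φ n) (Set.Ioc (0:ℝ) 1) := by
    intro n
    have hmeas : AEStronglyMeasurable (Φ n) (volume.restrict (Set.Ioc (0:ℝ) 1)) := by
      apply ContinuousOn.aestronglyMeasurable ((hΦcont n).mono ?_) measurableSet_Ioc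
      intro x hx
      exact ne_of_gt hx.1
    have hbound : IntegrableOn (fun θ : ℝ => ((2 * Real.pi * |(n:ℝ)|) ^ 2 * c n) * θ ^ (1 - t))
        (Set.Ioc (0:ℝ) 1) := (rpow_Ioc_integrableOn (by linarith)).const_mul _
    refine hbound.mono' hmeas ?_
    rw [ae_restrict_iff' measurableSet_Ioc]
    filter_upwards with θ hθ
    have hθ0 : 0 < θ := hθ.1
    have hub : 2 - 2 * Real.cos (2 * Real.pi * n * θ) ≤ (2 * Real.pi * n * θ) ^ 2 := by
      have := Real.one_sub_sq_div_two_le_cos (x := 2 * Real.pi * n * θ)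
      linarith
    rw [Real.norm_of_nonneg (hΦnonneg n θ hθ)]
    have hsq : (2 * Real.pi * (n:ℝ) * θ) ^ 2 = (2 * Real.pi * |(n:ℝ)|) ^ 2 * θ ^ 2 := by
      rw [show (2 * Real.pi * (n:ℝ) * θ) ^ 2 = (2 * Real.pi * (n:ℝ)) ^ 2 * θ ^ 2 by ring]
      rw [show (2 * Real.pi * |(n:ℝ)|) ^ 2 = (2*Real.pi)^2 * |(n:ℝ)| ^ 2 by ring]
      rw [sq_abs]
      ring
    have hpow : θ ^ (-1 - t) * θ ^ (2:ℕ) = θ ^ (1 - t) := by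
      rw [← Real.rpow_natCast θ 2, ← Real.rpow_add hθ0]
      congr 1
      ring
    calc θ ^ (-1 - t) * ((2 - 2 * Real.cos (2 * Real.pi * n * θ)) * c n)
        ≤ θ ^ (-1 - t) * (((2 * Real.pi * |(n:ℝ)|) ^ 2 * θ ^ 2) * c n) := by
          apply mul_le_mul_of_nonneg_left _ (Real.rpow_nonneg hθ0.le _)
          apply mul_le_mul_of_nonneg_right _ (hc0 n)
          rw [← hsq]; exact hub
      _ = ((2 * Real.pi * |(n:ℝ)|) ^ 2 * c n) * (θ ^ (-1 - t) * θ ^ (2:ℕ)) := by ring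
      _ = ((2 * Real.pi * |(n:ℝ)|) ^ 2 * c n) * θ ^ (1 - t) := by rw [hpow]
  -- main finite bound
  have main : ∀ A : Finset ℤ,
      ∑ n ∈ A, |(n:ℝ)| ^ t * c n ≤ C ^ 2 / (2 * (s - s')) := by
    intro A
    have lower : ∀ n : ℤ, |(n:ℝ)| ^ t * c n ≤ ∫ θ in Set.Ioc (0:ℝ) 1, Φ n θ := by
      intro n
      rcases eq_or_ne n 0 with rfl | hn
      · have h0 : |((0:ℤ):ℝ)| ^ t * c 0 = 0 := by
          simp [Real.zero_rpow ht0.ne']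
        rw [h0]
        exact setIntegral_nonneg measurableSet_Ioc (fun θ hθ => hΦnonneg 0 θ hθ)
      · set N : ℝ := |(n:ℝ)| with hN
        have hN1 : 1 ≤ N := by
          rw [hN, ← Int.cast_abs]
          exact_mod_cast Int.one_le_abs hn
        have hN0 : 0 < N := zero_lt_one.trans_le hN1
        set a : ℝ := (4*N)⁻¹ with haa
        set b : ℝ := (2*N)⁻¹ with hbb
        have ha0 : 0 < a := by rw [haa]; positivity
        have hab : a < b := by
          rw [haa, hbb, inv_lt_inv₀ (by positivity) (by positivity)]
          linarith
        have hb1 : b ≤ 1 := by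
          rw [hbb, inv_le_one₀ (by positivity)]
          linarith
        have hsub : Set.Ioc a b ⊆ Set.Ioc (0:ℝ) 1 := Set.Ioc_subset_Ioc ha0.le hb1
        have s1 : (∫ θ in Set.Ioc a b, Φ n θ) ≤ ∫ θ in Set.Ioc (0:ℝ) 1, Φ n θ := by
          refine setIntegral_mono_set (hΦint n) ?_ (HasSubset.Subset.eventuallyLE hsub)
          filter_upwards [ae_restrict_mem measurableSet_Ioc] with θ hθ
          simpa using hΦnonneg n θ hθ
        have hψint : IntegrableOn (fun θ : ℝ => 2 * c n * θ ^ (-1 - t)) (Set.Ioc a b) := by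
          have hcont : ContinuousOn (fun θ : ℝ => 2 * c n * θ ^ (-1-t)) (Set.Icc a b) := by
            refine ContinuousOn.mul continuousOn_const
              (ContinuousOn.rpow_const continuousOn_id (fun x hx => Or.inl ?_))
            exact ne_of_gt (lt_of_lt_of_le ha0 hx.1)
          exact (hcont.integrableOn_Icc).mono_set Set.Ioc_subset_Icc_self
        have hΦint2 : IntegrableOn (Φ n) (Set.Ioc a b) := (hΦint n).mono_set hsub
        have s2 : (∫ θ in Set.Ioc a b, 2 * c n * θ ^ (-1-t)) ≤ ∫ θ in Set.Ioc a b, Φ n θ := by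
          refine setIntegral_mono_on hψint hΦint2 measurableSet_Ioc (fun θ hθ => ?_)
          have hθ0 : 0 < θ := ha0.trans hθ.1
          have hcos : Real.cos (2*Real.pi*n*θ) ≤ 0 := by
            have habs : |2*Real.pi*(n:ℝ)*θ| = 2*Real.pi*N*θ := by
              rw [abs_mul, abs_mul, abs_mul, abs_two, abs_of_pos Real.pi_pos,
                abs_of_pos hθ0, hN]
            have hc1 : Real.cos (2*Real.pi*(n:ℝ)*θ) = Real.cos (2*Real.pi*N*θ) := by
              rw [← Real.cos_abs, habs]
            rw [hc1]
            apply Real.cos_nonpos_of_pi_div_two_le_of_le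
            · have h1 : a < θ := hθ.1
              have h2 : 2*Real.pi*N*a = Real.pi/2 := by
                rw [haa]
                field_simp
                ring
              nlinarith [Real.pi_pos]
            · have h1 : θ ≤ b := hθ.2
              have h2 : 2*Real.pi*N*b = Real.pi := by
                rw [hbb]
                field_simp
              nlinarith [Real.pi_pos]
          have hψ0 : 0 ≤ θ^(-1-t) := Real.rpow_nonneg hθ0.le _
          have hprod : 0 ≤ θ^(-1-t) * c n * (-Real.cos (2*Real.pi*n*θ)) :=
            mul_nonneg (mul_nonneg hψ0 (hc0 n)) (neg_nonneg.2 hcos)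
          simp only [hΦ]
          nlinarith [hprod]
        have s3 : (∫ θ in Set.Ioc a b, 2 * c n * θ ^ (-1-t))
            = 2 * c n * ((b ^ (-t) - a ^ (-t)) / (-t)) := by
          rw [← intervalIntegral.integral_of_le hab.le, intervalIntegral.integral_const_mul,
            integral_rpow (Or.inr ⟨by intro h; linarith, ?_⟩)]
          · rw [show -1 - t + 1 = -t by ring]
          · rw [Set.uIcc_of_le hab.le]
            intro h
            exact absurd h.1 (not_le.2 ha0)
        have s4 : N ^ t * c n ≤ 2 * c n * ((b ^ (-t) - a ^ (-t)) / (-t)) := by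
          have hae : a ^ (-t) = (4*N) ^ t := by
            rw [haa, Real.inv_rpow (by positivity), Real.rpow_neg (by positivity), inv_inv]
          have hbe : b ^ (-t) = (2*N) ^ t := by
            rw [hbb, Real.inv_rpow (by positivity), Real.rpow_neg (by positivity), inv_inv]
          rw [hae, hbe, Real.mul_rpow (by norm_num) hN0.le, Real.mul_rpow (by norm_num) hN0.le]
          have heq : 2 * c n * (((2:ℝ)^t*N^t - (4:ℝ)^t*N^t)/(-t))
              = (c n * N ^ t) * (2 * ((4:ℝ)^t - (2:ℝ)^t) / t) := by
            rw [div_neg, ← neg_div, neg_sub]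
            ring
          rw [heq]
          have h1 : (1:ℝ) ≤ 2 * ((4:ℝ)^t - (2:ℝ)^t) / t := by
            rw [le_div_iff₀ ht0]
            linarith [two_rpow_key ht0]
          calc N^t * c n = (c n * N^t) * 1 := by ring
            _ ≤ (c n * N^t) * (2*((4:ℝ)^t - (2:ℝ)^t)/t) := by
                apply mul_le_mul_of_nonneg_left h1
                have : (0:ℝ) ≤ N ^ t := Real.rpow_nonneg hN0.le t
                positivity
        linarith [s1, s2, s3 ▸ s4]
    have upper : ∑ n ∈ A, (∫ θ in Set.Ioc (0:ℝ) 1, Φ n θ) ≤ C ^ 2 / (2 * (s - s')) := by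
      rw [← MeasureTheory.integral_finset_sum A (fun n _ => hΦint n)]
      have hInt2 : IntegrableOn (fun θ : ℝ => C ^ 2 * θ ^ (2*s - t - 1)) (Set.Ioc (0:ℝ) 1) :=
        (rpow_Ioc_integrableOn (by linarith)).const_mul _
      have h1 : (∫ θ in Set.Ioc (0:ℝ) 1, ∑ n ∈ A, Φ n θ)
          ≤ ∫ θ in Set.Ioc (0:ℝ) 1, C ^ 2 * θ ^ (2*s - t - 1) := by
        refine setIntegral_mono_on (integrable_finset_sum A (fun n _ => hΦint n)) hInt2
          measurableSet_Ioc (fun θ hθ => ?_)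
        have hp := pointwise θ hθ A
        have hsum : ∑ n ∈ A, Φ n θ
            = θ ^ (-1 - t) * ∑ n ∈ A, (2 - 2*Real.cos (2*Real.pi*n*θ)) * c n := by
          rw [Finset.mul_sum]
        rw [hsum]
        have hψ : 0 ≤ θ ^ (-1-t) := Real.rpow_nonneg hθ.1.le _
        calc θ ^ (-1-t) * ∑ n ∈ A, (2 - 2*Real.cos (2*Real.pi*n*θ)) * c n
            ≤ θ^(-1-t) * (C^2 * θ^(2*s)) := mul_le_mul_of_nonneg_left hp hψ
          _ = C^2 * θ^(2*s - t - 1) := by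
              rw [mul_comm (θ^(-1-t)), mul_assoc, ← Real.rpow_add hθ.1,
                show 2*s + (-1-t) = 2*s - t - 1 by ring]
      have h2 : (∫ θ in Set.Ioc (0:ℝ) 1, C ^ 2 * θ ^ (2*s - t - 1))
          = C^2 / (2*(s-s')) := by
        rw [← intervalIntegral.integral_of_le (by norm_num : (0:ℝ) ≤ 1),
          intervalIntegral.integral_const_mul, integral_rpow (Or.inl (by linarith))]
        have he : 2*s - t - 1 + 1 = 2*(s - s') := by rw [ht]; ring
        rw [he, Real.one_rpow, Real.zero_rpow (ne_of_gt (by linarith : (0:ℝ) < 2*(s-s')))]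
        ring
      linarith
    calc ∑ n ∈ A, |(n:ℝ)| ^ t * c n ≤ ∑ n ∈ A, ∫ θ in Set.Ioc (0:ℝ) 1, Φ n θ :=
          Finset.sum_le_sum fun n _ => lower n
      _ ≤ C ^ 2 / (2 * (s - s')) := upper
  rw [ENNReal.tsum_eq_iSup_sum]
  refine iSup_le fun A => ?_
  rw [← ENNReal.ofReal_sum_of_nonneg (fun n _ => by positivity)]
  exact ENNReal.ofReal_le_ofReal (main A)
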